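/- Let G be a finite simple graph with vertex set V, and let B be a finite set of integer tables u : {0,1}^V → ℤ with π_G(u) = 0 for every u ∈ B. Then B is a Markov basis for G if and only if the set of binomials {p^{u⁺} − p^{u⁻} : u ∈ B} generates the toric ideal I_G. -/

import Mathlib

open MvPolynomial Finset

namespace BinaryGraphModels

variable {V : Type} [Fintype V] [DecidableEq V]

/-- The monomial map `φ_G` of the binary graph model: the variable `p_I` is sent to the
product over edges `{j,k}` of the variable `t^{jk}_{I(j)I(k)}` (encoded as the unordered pair
`{(j, I j), (k, I k)}`) times the product over isolated vertices `l` of `t^{l}_{I(l)}`. -/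
noncomputable def phi (G : SimpleGraph V) :
    MvPolynomial (V → Bool) ℂ →ₐ[ℂ] MvPolynomial (Sym2 (V × Bool) ⊕ (V × Bool)) ℂ := by
  letI : DecidableRel G.Adj := Classical.decRel _
  exact aeval fun I : V → Bool =>
    (∏ e ∈ G.edgeFinset,
      (X (Sum.inl (Sym2.map (fun v => (v, I v)) e)) :
        MvPolynomial (Sym2 (V × Bool) ⊕ (V × Bool)) ℂ)) *
    ∏ l ∈ univ.filter (fun l : V => ∀ k, ¬ G.Adj l k), X (Sum.inr (l, I l))

/-- The toric ideal `I_G` of the binary graph model of `G`. -/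
noncomputable def toricIdeal (G : SimpleGraph V) : Ideal (MvPolynomial (V → Bool) ℂ) :=
  RingHom.ker (phi G).toRingHom

/-- `I_G` is generated in degree at most `d`. -/
def GenInDegLE (G : SimpleGraph V) (d : ℕ) : Prop :=
  toricIdeal G =
    Ideal.span {f : MvPolynomial (V → Bool) ℂ | f ∈ toricIdeal G ∧ f.totalDegree ≤ d}

/-- The Markov width `μ(G)`: the least `d` such that `I_G` is generated in degree `≤ d`. -/
noncomputable def markovWidth (G : SimpleGraph V) : ℕ :=
  sInf {d : ℕ | GenInDegLE G d}

/-- `f` is a minimal generator of `I_G`, i.e. `f ∈ I_G` and `f ∉ 𝔪 · I_G` where `𝔪` is the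
irrelevant maximal ideal generated by all the variables. -/
def IsMinimalGenerator (G : SimpleGraph V) (f : MvPolynomial (V → Bool) ℂ) : Prop :=
  f ∈ toricIdeal G ∧
    f ∉ Ideal.span (Set.range (X : (V → Bool) → MvPolynomial (V → Bool) ℂ)) * toricIdeal G

/-- Two integer tables have the same `G`-marginals: equal two-way marginals along every edge
and equal one-way marginals at every isolated vertex. -/
def MarginalsEq (G : SimpleGraph V) (v₁ v₂ : (V → Bool) → ℤ) : Prop :=
  (∀ j k : V, G.Adj j k → ∀ a b : Bool,
    (∑ I : V → Bool, if I j = a ∧ I k = b then v₁ I else 0) =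
    (∑ I : V → Bool, if I j = a ∧ I k = b then v₂ I else 0)) ∧
  (∀ l : V, (∀ k, ¬ G.Adj l k) → ∀ a : Bool,
    (∑ I : V → Bool, if I l = a then v₁ I else 0) =
    (∑ I : V → Bool, if I l = a then v₂ I else 0))

/-- `B` is a Markov basis for `G`: any two nonnegative tables with the same `G`-marginals are
connected by a path of moves from `±B` staying nonnegative. -/
def IsMarkovBasis (G : SimpleGraph V) (B : Finset ((V → Bool) → ℤ)) : Prop :=
  ∀ v₁ v₂ : (V → Bool) → ℤ, (∀ I, 0 ≤ v₁ I) → (∀ I, 0 ≤ v₂ I) →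
    MarginalsEq G v₁ v₂ →
    ∃ L : List ((V → Bool) → ℤ),
      (∀ u ∈ L, u ∈ B ∨ -u ∈ B) ∧
      v₁ + L.sum = v₂ ∧
      ∀ n : ℕ, n ≤ L.length → ∀ I, 0 ≤ (v₁ + (L.take n).sum) I

/-- The binomial `p^{u⁺} - p^{u⁻}` associated to an integer table `u`. -/
noncomputable def moveBinomial (u : (V → Bool) → ℤ) : MvPolynomial (V → Bool) ℂ :=
  (∏ I : V → Bool, X I ^ (u I).toNat) - ∏ I : V → Bool, X I ^ (-u I).toNat

end BinaryGraphModels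

namespace BinaryGraphModels

set_option linter.unusedSectionVars false
open scoped Classical

section Aux

variable {V : Type} [Fintype V] [DecidableEq V]

/-- The exponent vector of `phi (X I)`. -/
noncomputable def DI (G : SimpleGraph V) (I : V → Bool) : (Sym2 (V × Bool) ⊕ (V × Bool)) →₀ ℕ := by
  letI : DecidableRel G.Adj := Classical.decRel _
  exact (∑ e ∈ G.edgeFinset, Finsupp.single (Sum.inl (Sym2.map (fun v => (v, I v)) e)) 1) +
    ∑ l ∈ univ.filter (fun l : V => ∀ k, ¬ G.Adj l k), Finsupp.single (Sum.inr (l, I l)) 1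

lemma prod_monomial_one {σ τ : Type} (s : Finset σ) (f : σ → (τ →₀ ℕ)) :
    ∏ i ∈ s, monomial (f i) (1:ℂ) = monomial (∑ i ∈ s, f i) 1 := by
  induction s using Finset.cons_induction with
  | empty => simp
  | cons a s ha ih =>
    rw [Finset.prod_cons, Finset.sum_cons, ih, monomial_mul, one_mul]

lemma phi_X (G : SimpleGraph V) (I : V → Bool) :
    phi G (X I) = monomial (DI G I) 1 := by
  rw [phi, DI]
  simp only [aeval_X]
  have hX : ∀ s : Sym2 (V × Bool) ⊕ (V × Bool),
      (X s : MvPolynomial (Sym2 (V × Bool) ⊕ (V × Bool)) ℂ) = monomial (Finsupp.single s 1) 1 :=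
    fun s => rfl
  simp only [hX, prod_monomial_one, monomial_mul, mul_one]

lemma DI_inl (G : SimpleGraph V) (I : V → Bool) (j k : V) (α β : Bool) :
    DI G I (Sum.inl s((j, α), (k, β))) =
      if G.Adj j k ∧ I j = α ∧ I k = β then 1 else 0 := by
  letI : DecidableRel G.Adj := Classical.decRel _
  rw [DI]
  simp only [Finsupp.add_apply, Finsupp.finset_sum_apply, Finsupp.single_apply]
  have h2 : (∑ l ∈ univ.filter (fun l : V => ∀ k, ¬ G.Adj l k),
      if (Sum.inr (l, I l) : Sym2 (V × Bool) ⊕ (V × Bool)) = Sum.inl s((j, α), (k, β)) then 1 else 0) = 0 := by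
    simp
  rw [h2, add_zero]
  have key : ∀ e ∈ G.edgeFinset,
      ((Sum.inl (Sym2.map (fun v => (v, I v)) e) : Sym2 (V × Bool) ⊕ (V × Bool)) = Sum.inl s((j, α), (k, β)))
      ↔ (e = s(j, k) ∧ (I j = α ∧ I k = β)) := by
    intro e he
    induction e using Sym2.ind with
    | _ x y =>
      have hxy : x ≠ y := by
        rw [SimpleGraph.mem_edgeFinset, SimpleGraph.mem_edgeSet] at he
        exact he.ne
      simp only [Sum.inl.injEq, Sym2.map_pair_eq, Sym2.eq_iff, Prod.ext_iff]
      constructor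
      · rintro (⟨⟨rfl, rfl⟩, rfl, rfl⟩ | ⟨⟨rfl, rfl⟩, rfl, rfl⟩) <;> tauto
      · rintro ⟨(⟨rfl, rfl⟩ | ⟨rfl, rfl⟩), rfl, rfl⟩ <;> tauto
  calc (∑ e ∈ G.edgeFinset,
      if (Sum.inl (Sym2.map (fun v => (v, I v)) e) : Sym2 (V × Bool) ⊕ (V × Bool)) = Sum.inl s((j, α), (k, β)) then 1 else 0)
      = ∑ e ∈ G.edgeFinset, if e = s(j, k) ∧ (I j = α ∧ I k = β) then 1 else 0 := by
        refine Finset.sum_congr rfl fun e he => ?_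
        exact if_congr (key e he) rfl rfl
    _ = if G.Adj j k ∧ I j = α ∧ I k = β then 1 else 0 := by
        by_cases hIb : I j = α ∧ I k = β
        · simp only [hIb, and_true]
          rw [Finset.sum_ite_eq' G.edgeFinset (s(j, k)) (fun _ => 1)]
          simp [SimpleGraph.mem_edgeFinset, SimpleGraph.mem_edgeSet]
        · simp [hIb]

lemma DI_inr (G : SimpleGraph V) (I : V → Bool) (l : V) (α : Bool) :
    DI G I (Sum.inr (l, α)) = if (∀ k, ¬ G.Adj l k) ∧ I l = α then 1 else 0 := by
  letI : DecidableRel G.Adj := Classical.decRel _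
  rw [DI]
  simp only [Finsupp.add_apply, Finsupp.finset_sum_apply, Finsupp.single_apply]
  have h1 : (∑ e ∈ G.edgeFinset,
      if (Sum.inl (Sym2.map (fun v => (v, I v)) e) : Sym2 (V × Bool) ⊕ (V × Bool)) = Sum.inr (l, α) then 1 else 0) = 0 := by
    simp
  rw [h1, zero_add]
  have key : ∀ l' : V, ((Sum.inr (l', I l') : Sym2 (V × Bool) ⊕ (V × Bool)) = Sum.inr (l, α))
      ↔ (l' = l ∧ I l = α) := by
    intro l'
    simp only [Sum.inr.injEq, Prod.ext_iff]
    constructor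
    · rintro ⟨rfl, rfl⟩; exact ⟨rfl, rfl⟩
    · rintro ⟨rfl, rfl⟩; exact ⟨rfl, rfl⟩
  calc (∑ l' ∈ univ.filter (fun l' : V => ∀ k, ¬ G.Adj l' k),
      if (Sum.inr (l', I l') : Sym2 (V × Bool) ⊕ (V × Bool)) = Sum.inr (l, α) then 1 else 0)
      = ∑ l' ∈ univ.filter (fun l' : V => ∀ k, ¬ G.Adj l' k), if l' = l ∧ I l = α then 1 else 0 := by
        refine Finset.sum_congr rfl fun l' _ => ?_
        exact if_congr (key l') rfl rfl
    _ = if (∀ k, ¬ G.Adj l k) ∧ I l = α then 1 else 0 := by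
        by_cases hIl : I l = α
        · simp only [hIl, and_true]
          rw [Finset.sum_ite_eq' _ l (fun _ => 1)]
          simp
        · simp [hIl]

/-- Exponent of `phi (p^a)`. -/
noncomputable def expoSum (G : SimpleGraph V) (a : (V → Bool) → ℕ) :
    (Sym2 (V × Bool) ⊕ (V × Bool)) →₀ ℕ :=
  ∑ I : V → Bool, a I • DI G I

lemma expoSum_apply (G : SimpleGraph V) (a : (V → Bool) → ℕ) (t : Sym2 (V × Bool) ⊕ (V × Bool)) :
    expoSum G a t = ∑ I : V → Bool, a I * DI G I t := by
  rw [expoSum]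
  simp [Finsupp.finset_sum_apply]

lemma expoSum_inl (G : SimpleGraph V) (a : (V → Bool) → ℕ) (j k : V) (α β : Bool)
    (hjk : G.Adj j k) :
    expoSum G a (Sum.inl s((j, α), (k, β))) =
      ∑ I : V → Bool, if I j = α ∧ I k = β then a I else 0 := by
  rw [expoSum_apply]
  refine Finset.sum_congr rfl fun I _ => ?_
  rw [DI_inl]
  by_cases h : I j = α ∧ I k = β <;> simp [h, hjk]

lemma expoSum_inr (G : SimpleGraph V) (a : (V → Bool) → ℕ) (l : V) (α : Bool)
    (hl : ∀ k, ¬ G.Adj l k) :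
    expoSum G a (Sum.inr (l, α)) = ∑ I : V → Bool, if I l = α then a I else 0 := by
  rw [expoSum_apply]
  refine Finset.sum_congr rfl fun I _ => ?_
  rw [DI_inr]
  by_cases h : I l = α <;> simp [h, hl]

lemma cast_marg_sum (P : (V → Bool) → Prop) [DecidablePred P] (a : (V → Bool) → ℕ) :
    (∑ I : V → Bool, if P I then ((a I : ℤ)) else 0) =
      ((∑ I : V → Bool, if P I then a I else 0 : ℕ) : ℤ) := by
  push_cast [apply_ite (Nat.cast : ℕ → ℤ)]
  rfl

/-- The key equivalence: equal marginals iff equal exponent vectors under `phi`. -/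
lemma marginalsEq_iff (G : SimpleGraph V) (a b : (V → Bool) → ℕ) :
    MarginalsEq G (fun I => (a I : ℤ)) (fun I => (b I : ℤ)) ↔ expoSum G a = expoSum G b := by
  constructor
  · rintro ⟨h1, h2⟩
    ext t
    obtain z | ⟨l, α⟩ := t
    · induction z using Sym2.ind with
      | _ x y =>
        obtain ⟨j, α⟩ := x
        obtain ⟨k, β⟩ := y
        by_cases hjk : G.Adj j k
        · rw [expoSum_inl G a j k α β hjk, expoSum_inl G b j k α β hjk]
          have := h1 j k hjk α β
          rw [cast_marg_sum, cast_marg_sum] at this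
          exact_mod_cast this
        · rw [expoSum_apply, expoSum_apply]
          refine Finset.sum_congr rfl fun I _ => ?_
          rw [DI_inl]
          simp [hjk]
    · by_cases hl : ∀ k, ¬ G.Adj l k
      · rw [expoSum_inr G a l α hl, expoSum_inr G b l α hl]
        have := h2 l hl α
        rw [cast_marg_sum, cast_marg_sum] at this
        exact_mod_cast this
      · rw [expoSum_apply, expoSum_apply]
        refine Finset.sum_congr rfl fun I _ => ?_
        rw [DI_inr]
        simp [hl]
  · intro h
    constructor
    · intro j k hjk α β
      have := congrArg (fun f => (f (Sum.inl s((j, α), (k, β))) : ℤ)) h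
      rw [expoSum_inl G a j k α β hjk, expoSum_inl G b j k α β hjk] at this
      rw [cast_marg_sum, cast_marg_sum]
      exact_mod_cast this
    · intro l hl α
      have := congrArg (fun f => (f (Sum.inr (l, α)) : ℤ)) h
      rw [expoSum_inr G a l α hl, expoSum_inr G b l α hl] at this
      rw [cast_marg_sum, cast_marg_sum]
      exact_mod_cast this

noncomputable def toF (a : (V → Bool) → ℕ) : (V → Bool) →₀ ℕ :=
  Finsupp.equivFunOnFinite.symm a

@[simp] lemma toF_apply (a : (V → Bool) → ℕ) (I : V → Bool) : toF a I = a I := rfl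

@[simp] lemma toF_coe (m : (V → Bool) →₀ ℕ) : toF (⇑m) = m := by
  ext I; rfl

lemma prod_X_pow (a : (V → Bool) → ℕ) :
    (∏ I : V → Bool, (X I : MvPolynomial (V → Bool) ℂ) ^ a I) = monomial (toF a) 1 := by
  rw [← prod_X_pow_eq_monomial]
  refine (Finset.prod_subset (Finset.subset_univ _) ?_).symm
  intro I _ hI
  have : a I = 0 := by
    by_contra h
    exact hI (Finsupp.mem_support_iff.mpr (by simpa [toF_apply] using h))
  simp [toF_apply, this]

lemma prod_X_pow_m (m : (V → Bool) →₀ ℕ) :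
    (∏ I : V → Bool, (X I : MvPolynomial (V → Bool) ℂ) ^ m I) = monomial m 1 := by
  rw [prod_X_pow, toF_coe]

lemma phi_prod (G : SimpleGraph V) (a : (V → Bool) → ℕ) :
    phi G (∏ I : V → Bool, X I ^ a I) = monomial (expoSum G a) 1 := by
  rw [map_prod]
  simp only [map_pow, phi_X]
  have h : ∀ I : V → Bool, (monomial (DI G I) (1:ℂ)) ^ a I = monomial (a I • DI G I) 1 := by
    intro I; rw [monomial_pow, one_pow]
  simp only [h]
  rw [prod_monomial_one]
  rfl

lemma phi_monomial (G : SimpleGraph V) (m : (V → Bool) →₀ ℕ) :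
    phi G (monomial m 1) = monomial (expoSum G ⇑m) 1 := by
  rw [← prod_X_pow_m m, phi_prod]

/-- Generic kernel-fiber span lemma. -/
lemma mem_span_binomials {σ τ : Type} [DecidableEq τ] (F : (σ →₀ ℕ) → τ)
    (f : MvPolynomial σ ℂ)
    (h : ∀ n : τ, ∑ m ∈ f.support.filter (fun m => F m = n), f.coeff m = 0) :
    f ∈ Submodule.span ℂ
      {g : MvPolynomial σ ℂ | ∃ m m' : σ →₀ ℕ, F m = F m' ∧ g = monomial m 1 - monomial m' 1} := by
  generalize hc : f.support.card = c
  induction c using Nat.strong_induction_on generalizing f with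
  | _ c ih =>
    rcases Finset.eq_empty_or_nonempty f.support with hs | ⟨m₀, hm₀⟩
    · have : f = 0 := by rwa [← MvPolynomial.support_eq_empty]
      simp [this]
    · set S := f.support.filter (fun m => F m = F m₀) with hS
      have hm₀S : m₀ ∈ S := Finset.mem_filter.mpr ⟨hm₀, rfl⟩
      have hSsum : ∑ m ∈ S, f.coeff m = 0 := h (F m₀)
      set h₀ : MvPolynomial σ ℂ :=
        ∑ m ∈ S, f.coeff m • (monomial m 1 - monomial m₀ 1) with hh₀
      have hspan : h₀ ∈ Submodule.span ℂ
          {g : MvPolynomial σ ℂ | ∃ m m' : σ →₀ ℕ, F m = F m' ∧ g = monomial m 1 - monomial m' 1} := by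
        refine Submodule.sum_mem _ fun m hm => Submodule.smul_mem _ _ ?_
        exact Submodule.subset_span ⟨m, m₀, (Finset.mem_filter.mp hm).2, rfl⟩
      have hcoeff : ∀ m : σ →₀ ℕ, h₀.coeff m = if m ∈ S then f.coeff m else 0 := by
        intro m
        rw [hh₀]
        rw [MvPolynomial.coeff_sum]
        simp only [coeff_smul, coeff_sub, coeff_monomial, smul_eq_mul, mul_sub]
        rw [Finset.sum_sub_distrib]
        have e1 : ∑ m' ∈ S, f.coeff m' * (if m' = m then (1:ℂ) else 0) =
            if m ∈ S then f.coeff m else 0 := by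
          simp only [mul_ite, mul_one, mul_zero]
          exact Finset.sum_ite_eq' S m (fun m' => f.coeff m')
        have e2 : ∑ m' ∈ S, f.coeff m' * (if m₀ = m then (1:ℂ) else 0) = 0 := by
          rw [← Finset.sum_mul, hSsum, zero_mul]
        rw [e1, e2, sub_zero]
      set f' : MvPolynomial σ ℂ := f - h₀ with hf'
      have hf'coeff : ∀ m : σ →₀ ℕ, f'.coeff m = if m ∈ S then 0 else f.coeff m := by
        intro m
        rw [hf', coeff_sub, hcoeff]
        by_cases hm : m ∈ S <;> simp [hm]
      have hf'supp : f'.support ⊆ f.support.erase m₀ := by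
        intro m hm
        rw [MvPolynomial.mem_support_iff, hf'coeff] at hm
        by_cases hmS : m ∈ S
        · simp [hmS] at hm
        · refine Finset.mem_erase.mpr ⟨?_, MvPolynomial.mem_support_iff.mpr (by simpa [hmS] using hm)⟩
          rintro rfl; exact hmS hm₀S
      have hcard : f'.support.card < c := by
        calc f'.support.card ≤ (f.support.erase m₀).card := Finset.card_le_card hf'supp
          _ < f.support.card := Finset.card_erase_lt_of_mem hm₀
          _ = c := hc
      have hcond : ∀ n : τ, ∑ m ∈ f'.support.filter (fun m => F m = n), f'.coeff m = 0 := by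
        intro n
        have hsub : f'.support.filter (fun m => F m = n) ⊆ f.support.filter (fun m => F m = n) := by
          intro m hm
          rw [Finset.mem_filter] at hm ⊢
          exact ⟨Finset.mem_of_mem_erase (hf'supp hm.1), hm.2⟩
        rw [Finset.sum_subset hsub (fun m hmf hm => by
          have hns : m ∉ f'.support := fun hx =>
            hm (Finset.mem_filter.mpr ⟨hx, (Finset.mem_filter.mp hmf).2⟩)
          exact MvPolynomial.notMem_support_iff.mp hns)]
        by_cases hn : n = F m₀
        · refine Finset.sum_eq_zero fun m hm => ?_
          rw [hf'coeff]
          have : m ∈ S := Finset.mem_filter.mpr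
            ⟨(Finset.mem_filter.mp hm).1, by rw [(Finset.mem_filter.mp hm).2, hn]⟩
          simp [this]
        · rw [Finset.sum_congr rfl (fun m hm => ?_), h n]
          rw [hf'coeff]
          have : m ∉ S := fun hmS =>
            hn (((Finset.mem_filter.mp hm).2).symm.trans (Finset.mem_filter.mp hmS).2)
          simp [this]
      have hmem := ih f'.support.card hcard f' hcond rfl
      have hfeq : f = f' + h₀ := by rw [hf']; ring
      rw [hfeq]
      exact Submodule.add_mem _ hmem hspan

/-- One Markov step stays in the ideal. -/
lemma step_mem (B : Finset ((V → Bool) → ℤ)) (v u : (V → Bool) → ℤ)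
    (hv : ∀ I, 0 ≤ v I) (hvu : ∀ I, 0 ≤ (v + u) I) (hu : u ∈ B ∨ -u ∈ B) :
    (∏ I : V → Bool, (X I : MvPolynomial (V → Bool) ℂ) ^ (v I).toNat) -
      (∏ I : V → Bool, X I ^ ((v + u) I).toNat) ∈
      Ideal.span (moveBinomial '' (B : Set ((V → Bool) → ℤ))) := by
  set w : (V → Bool) → ℕ := fun I => min (v I).toNat ((v I + u I).toNat) with hw
  have h1 : ∀ I, (v I).toNat = w I + (-u I).toNat := by
    intro I; have := hv I; have := hvu I; simp only [hw, Pi.add_apply] at *; omega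
  have h2 : ∀ I, ((v + u) I).toNat = w I + (u I).toNat := by
    intro I; have := hv I; have := hvu I; simp only [hw, Pi.add_apply] at *; omega
  have e1 : (∏ I : V → Bool, (X I : MvPolynomial (V → Bool) ℂ) ^ (v I).toNat) =
      (∏ I : V → Bool, (X I : MvPolynomial (V → Bool) ℂ) ^ w I) *
      ∏ I : V → Bool, X I ^ (-u I).toNat := by
    rw [← Finset.prod_mul_distrib]
    exact Finset.prod_congr rfl fun I _ => by rw [h1 I, pow_add]
  have e2 : (∏ I : V → Bool, (X I : MvPolynomial (V → Bool) ℂ) ^ ((v + u) I).toNat) =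
      (∏ I : V → Bool, (X I : MvPolynomial (V → Bool) ℂ) ^ w I) *
      ∏ I : V → Bool, X I ^ (u I).toNat := by
    rw [← Finset.prod_mul_distrib]
    exact Finset.prod_congr rfl fun I _ => by rw [h2 I, pow_add]
  rw [e1, e2, ← mul_sub]
  rcases hu with hu | hu
  · have : (∏ I : V → Bool, (X I : MvPolynomial (V → Bool) ℂ) ^ (-u I).toNat) -
        ∏ I : V → Bool, X I ^ (u I).toNat = -moveBinomial u := by
      rw [moveBinomial]; ring
    rw [this, mul_neg]
    exact neg_mem (Ideal.mul_mem_left _ _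
      (Ideal.subset_span ⟨u, by simpa using hu, rfl⟩))
  · have : (∏ I : V → Bool, (X I : MvPolynomial (V → Bool) ℂ) ^ (-u I).toNat) -
        ∏ I : V → Bool, X I ^ (u I).toNat = moveBinomial (-u) := by
      rw [moveBinomial]
      simp only [Pi.neg_apply, neg_neg]
    rw [this]
    exact Ideal.mul_mem_left _ _ (Ideal.subset_span ⟨-u, by simpa using hu, rfl⟩)

lemma telescope_mem (B : Finset ((V → Bool) → ℤ)) (L : List ((V → Bool) → ℤ))
    (v₁ : (V → Bool) → ℤ) (hL : ∀ u ∈ L, u ∈ B ∨ -u ∈ B)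
    (hnn : ∀ n : ℕ, n ≤ L.length → ∀ I, 0 ≤ (v₁ + (L.take n).sum) I) :
    (∏ I : V → Bool, (X I : MvPolynomial (V → Bool) ℂ) ^ (v₁ I).toNat) -
      (∏ I : V → Bool, X I ^ ((v₁ + L.sum) I).toNat) ∈
      Ideal.span (moveBinomial '' (B : Set ((V → Bool) → ℤ))) := by
  induction L generalizing v₁ with
  | nil => simp
  | cons u L' ih =>
    have hv₁ : ∀ I, 0 ≤ v₁ I := by simpa using hnn 0 (by simp)
    have hv₂ : ∀ I, 0 ≤ (v₁ + u) I := by simpa using hnn 1 (by simp)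
    have hstep := step_mem B v₁ u hv₁ hv₂ (hL u (by simp))
    have hrest := ih (v₁ + u) (fun x hx => hL x (by simp [hx]))
      (fun n hn I => by
        have := hnn (n + 1) (by simpa using Nat.succ_le_succ hn) I
        simpa [List.take_succ_cons, add_assoc] using this)
    have hsum : v₁ + (u :: L').sum = (v₁ + u) + L'.sum := by
      simp [List.sum_cons]; ring
    rw [hsum]
    have heq : (∏ I : V → Bool, (X I : MvPolynomial (V → Bool) ℂ) ^ (v₁ I).toNat) -
        (∏ I : V → Bool, X I ^ (((v₁ + u) + L'.sum) I).toNat) =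
        ((∏ I : V → Bool, (X I : MvPolynomial (V → Bool) ℂ) ^ (v₁ I).toNat) -
          (∏ I : V → Bool, X I ^ ((v₁ + u) I).toNat)) +
        ((∏ I : V → Bool, (X I : MvPolynomial (V → Bool) ℂ) ^ ((v₁ + u) I).toNat) -
          (∏ I : V → Bool, X I ^ (((v₁ + u) + L'.sum) I).toNat)) := by ring
    rw [heq]
    exact Ideal.add_mem _ hstep hrest

/-- A single Markov move between nonnegative tables (encoded as `ℕ`-finsupps). -/
def MStep (B : Finset ((V → Bool) → ℤ)) (a b : (V → Bool) →₀ ℕ) : Prop :=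
  ∃ u : (V → Bool) → ℤ, (u ∈ B ∨ -u ∈ B) ∧
    (fun I => (a I : ℤ)) + u = fun I => (b I : ℤ)

lemma MStep.symm' {B : Finset ((V → Bool) → ℤ)} {a b : (V → Bool) →₀ ℕ}
    (h : MStep B a b) : MStep B b a := by
  obtain ⟨u, hu, he⟩ := h
  refine ⟨-u, ?_, by rw [← he]; ring⟩
  rcases hu with h | h
  · exact Or.inr (by simpa)
  · exact Or.inl h

lemma MStep.add_right {B : Finset ((V → Bool) → ℤ)} {a b : (V → Bool) →₀ ℕ}
    (c : (V → Bool) →₀ ℕ) (h : MStep B a b) : MStep B (a + c) (b + c) := by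
  obtain ⟨u, hu, he⟩ := h
  refine ⟨u, hu, ?_⟩
  funext I
  have := congrFun he I
  simp only [Pi.add_apply, Finsupp.coe_add] at this ⊢
  push_cast
  linarith

/-- The congruence of Markov-connectivity. -/
def mcon (B : Finset ((V → Bool) → ℤ)) : AddCon ((V → Bool) →₀ ℕ) where
  r := Relation.ReflTransGen (MStep B)
  iseqv := by
    refine ⟨fun _ => Relation.ReflTransGen.refl, ?_, fun h1 h2 => h1.trans h2⟩
    exact fun h => by
      haveI : Std.Symm (MStep B) := ⟨fun _ _ hs => hs.symm'⟩
      exact Std.Symm.symm _ _ h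
  add' := by
    intro w x y z h1 h2
    have t1 : Relation.ReflTransGen (MStep B) (w + y) (x + y) :=
      Relation.ReflTransGen.lift (fun t => t + y) (fun _ _ hs => MStep.add_right y hs) _ _ h1
    have t2 : Relation.ReflTransGen (MStep B) (x + y) (x + z) := by
      have := Relation.ReflTransGen.lift (fun t => t + x) (fun _ _ hs => MStep.add_right x hs) _ _ h2
      simpa [add_comm] using this
    exact t1.trans t2

lemma mcon_iff (B : Finset ((V → Bool) → ℤ)) (a b : (V → Bool) →₀ ℕ) :
    mcon B a b ↔ Relation.ReflTransGen (MStep B) a b := Iff.rfl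

/-- The quotient ring hom. -/
noncomputable def psi (B : Finset ((V → Bool) → ℤ)) :
    MvPolynomial (V → Bool) ℂ →+* AddMonoidAlgebra ℂ (mcon B).Quotient :=
  AddMonoidAlgebra.mapDomainRingHom ℂ (mcon B).mk'

lemma psi_monomial (B : Finset ((V → Bool) → ℤ)) (m : (V → Bool) →₀ ℕ) :
    psi B (monomial m 1) = AddMonoidAlgebra.single ((mcon B).mk' m) 1 := by
  rw [psi, ← MvPolynomial.single_eq_monomial]
  exact AddMonoidAlgebra.mapDomain_single

/-- Extract a path list from reflexive-transitive connectivity. -/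
lemma rtg_to_list (B : Finset ((V → Bool) → ℤ)) (a b : (V → Bool) →₀ ℕ)
    (h : Relation.ReflTransGen (MStep B) a b) :
    ∃ L : List ((V → Bool) → ℤ),
      (∀ u ∈ L, u ∈ B ∨ -u ∈ B) ∧
      (fun I => (a I : ℤ)) + L.sum = (fun I => (b I : ℤ)) ∧
      ∀ n : ℕ, n ≤ L.length → ∀ I, 0 ≤ ((fun I => (a I : ℤ)) + (L.take n).sum) I := by
  induction h with
  | refl =>
    exact ⟨[], by simp, by simp, fun n hn I => by
      simp at hn; simp [hn]⟩
  | tail hab hbc ih =>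
    obtain ⟨L, hL, hsum, hnn⟩ := ih
    obtain ⟨u, hu, he⟩ := hbc
    refine ⟨L ++ [u], ?_, ?_, ?_⟩
    · intro x hx
      rcases List.mem_append.mp hx with hx | hx
      · exact hL x hx
      · simp at hx; subst hx; exact hu
    · rw [List.sum_append, List.sum_cons, List.sum_nil, add_zero, ← add_assoc, hsum, he]
    · intro n hn I
      rcases Nat.lt_or_ge n (L.length + 1) with hlt | hge
      · have hn' : n ≤ L.length := by omega
        rw [List.take_append_of_le_length hn']
        exact hnn n hn' I
      · have hn' : n = L.length + 1 := by
          simp at hn; omega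
        subst hn'
        rw [List.take_of_length_le (by simp)]
        rw [List.sum_append, List.sum_cons, List.sum_nil, add_zero, ← add_assoc, hsum, he]
        positivity

/-- positive and negative parts of a move have equal marginals -/
lemma marg_pos_neg (G : SimpleGraph V) (u : (V → Bool) → ℤ) (h : MarginalsEq G u 0) :
    MarginalsEq G (fun I => (((u I).toNat : ℕ) : ℤ)) (fun I => (((-u I).toNat : ℕ) : ℤ)) := by
  have key : ∀ (P : (V → Bool) → Prop) [DecidablePred P],
      (∑ I : V → Bool, if P I then u I else 0) = 0 →
      (∑ I : V → Bool, if P I then (((u I).toNat : ℕ) : ℤ) else 0) =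
      (∑ I : V → Bool, if P I then (((-u I).toNat : ℕ) : ℤ) else 0) := by
    intro P _ hP
    rw [← sub_eq_zero, ← Finset.sum_sub_distrib, ← hP]
    refine Finset.sum_congr rfl fun I _ => ?_
    by_cases h : P I <;> simp [h] <;> omega
  obtain ⟨h1, h2⟩ := h
  constructor
  · intro j k hjk α β
    refine key _ ?_
    have := h1 j k hjk α β
    simpa using this
  · intro l hl α
    refine key _ ?_
    have := h2 l hl α
    simpa using this

end Aux

end BinaryGraphModels

namespace BinaryGraphModels

/-- Diaconis–Sturmfels: a finite set `B` of moves (integer tables with zero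
`G`-marginals) is a Markov basis for `G` if and only if the binomials
`p^{u⁺} - p^{u⁻}`, `u ∈ B`, generate the toric ideal `I_G`. -/
theorem markovBasis_iff_span {V : Type} [Fintype V] [DecidableEq V]
    (G : SimpleGraph V) (B : Finset ((V → Bool) → ℤ))
    (hB : ∀ u ∈ B, MarginalsEq G u 0) :
    IsMarkovBasis G B ↔
      toricIdeal G = Ideal.span (moveBinomial '' (B : Set ((V → Bool) → ℤ))) := by
  classical
  constructor
  · intro hM
    apply le_antisymm
    · -- toricIdeal ≤ span
      intro f hf
      rw [toricIdeal, RingHom.mem_ker] at hf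
      replace hf : phi G f = 0 := hf
      set F : ((V → Bool) →₀ ℕ) → ((Sym2 (V × Bool) ⊕ (V × Bool)) →₀ ℕ) :=
        fun m => expoSum G ⇑m with hF
      have hfib : ∀ n, ∑ m ∈ f.support.filter (fun m => F m = n), f.coeff m = 0 := by
        intro n
        have hphi : phi G f = ∑ m ∈ f.support, f.coeff m • monomial (F m) (1 : ℂ) := by
          conv_lhs => rw [f.as_sum]
          rw [map_sum]
          refine Finset.sum_congr rfl fun m hm => ?_
          have hmc : (monomial m (f.coeff m) : MvPolynomial (V → Bool) ℂ) =
              f.coeff m • monomial m 1 := by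
            rw [MvPolynomial.smul_monomial, smul_eq_mul, mul_one]
          rw [hmc, map_smul, phi_monomial]
        have hco := congrArg (MvPolynomial.coeff n) hphi
        rw [hf] at hco
        rw [MvPolynomial.coeff_zero] at hco
        rw [MvPolynomial.coeff_sum] at hco
        simp only [MvPolynomial.coeff_smul, MvPolynomial.coeff_monomial, smul_eq_mul,
          mul_ite, mul_one, mul_zero] at hco
        rw [Finset.sum_filter]
        exact hco.symm
      have hsp := mem_span_binomials F f hfib
      have hle : Submodule.span ℂ
          {g : MvPolynomial (V → Bool) ℂ |
            ∃ m m' : (V → Bool) →₀ ℕ, F m = F m' ∧ g = monomial m 1 - monomial m' 1} ≤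
          (Ideal.span (moveBinomial '' (B : Set ((V → Bool) → ℤ)))).restrictScalars ℂ := by
        rw [Submodule.span_le]
        rintro g ⟨m, m', hmm, rfl⟩
        show _ ∈ Ideal.span (moveBinomial '' (B : Set ((V → Bool) → ℤ)))
        have hmarg : MarginalsEq G (fun I => ((m I : ℕ) : ℤ)) (fun I => ((m' I : ℕ) : ℤ)) :=
          (marginalsEq_iff G ⇑m ⇑m').mpr hmm
        obtain ⟨L, hL, hsum, hnn⟩ := hM _ _ (fun I => Int.natCast_nonneg _)
          (fun I => Int.natCast_nonneg _) hmarg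
        have htel := telescope_mem B L (fun I => ((m I : ℕ) : ℤ)) hL hnn
        rw [hsum] at htel
        have e1 : (∏ I : V → Bool, (X I : MvPolynomial (V → Bool) ℂ) ^
            (((m I : ℕ) : ℤ)).toNat) = monomial m 1 := by
          rw [← prod_X_pow_m m]
          exact Finset.prod_congr rfl fun I _ => by rw [Int.toNat_natCast]
        have e2 : (∏ I : V → Bool, (X I : MvPolynomial (V → Bool) ℂ) ^
            (((m' I : ℕ) : ℤ)).toNat) = monomial m' 1 := by
          rw [← prod_X_pow_m m']
          exact Finset.prod_congr rfl fun I _ => by rw [Int.toNat_natCast]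
        rw [e1, e2] at htel
        exact htel
      exact hle hsp
    · rw [Ideal.span_le]
      rintro g ⟨u, hu, rfl⟩
      show moveBinomial u ∈ toricIdeal G
      rw [toricIdeal, RingHom.mem_ker]
      show phi G (moveBinomial u) = 0
      rw [moveBinomial, map_sub, phi_prod, phi_prod,
        (marginalsEq_iff G _ _).mp (marg_pos_neg G u (hB u hu)), sub_self]
  · intro hspan
    intro v₁ v₂ h1 h2 hm
    set a : (V → Bool) → ℕ := fun I => (v₁ I).toNat with ha
    set b : (V → Bool) → ℕ := fun I => (v₂ I).toNat with hb
    have hv₁ : v₁ = fun I => ((a I : ℕ) : ℤ) := funext fun I => (Int.toNat_of_nonneg (h1 I)).symm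
    have hv₂ : v₂ = fun I => ((b I : ℕ) : ℤ) := funext fun I => (Int.toNat_of_nonneg (h2 I)).symm
    have hmarg : MarginalsEq G (fun I => ((a I : ℕ) : ℤ)) (fun I => ((b I : ℕ) : ℤ)) := by
      rw [← hv₁, ← hv₂]; exact hm
    have hexpo := (marginalsEq_iff G a b).mp hmarg
    have hker : (∏ I : V → Bool, (X I : MvPolynomial (V → Bool) ℂ) ^ a I) -
        (∏ I : V → Bool, X I ^ b I) ∈ toricIdeal G := by
      rw [toricIdeal, RingHom.mem_ker]
      show phi G _ = 0
      rw [map_sub, phi_prod, phi_prod, hexpo, sub_self]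
    rw [hspan] at hker
    have hker2 : Ideal.span (moveBinomial '' (B : Set ((V → Bool) → ℤ))) ≤
        RingHom.ker (psi B) := by
      rw [Ideal.span_le]
      rintro g ⟨u, hu, rfl⟩
      show psi B (moveBinomial u) = 0
      rw [moveBinomial, map_sub, prod_X_pow, prod_X_pow, psi_monomial, psi_monomial]
      have hrel : mcon B (toF fun I => (u I).toNat) (toF fun I => (-u I).toNat) := by
        rw [mcon_iff]
        refine Relation.ReflTransGen.single ?_
        refine ⟨-u, Or.inr (by simpa), ?_⟩
        funext I
        simp only [Pi.add_apply, Pi.neg_apply, toF_apply]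
        omega
      have hq : (mcon B).mk' (toF fun I => (u I).toNat) =
          (mcon B).mk' (toF fun I => (-u I).toNat) := (AddCon.eq _).mpr hrel
      rw [hq, sub_self]
    have hz := hker2 hker
    rw [RingHom.mem_ker] at hz
    rw [prod_X_pow, prod_X_pow, map_sub, psi_monomial, psi_monomial, sub_eq_zero] at hz
    have hclass := AddMonoidAlgebra.single_inj.mp hz
    have hcc : Relation.ReflTransGen (MStep B) (toF a) (toF b) := by
      rcases hclass with ⟨hq, _⟩ | ⟨h10, _⟩
      · exact (AddCon.eq _).mp hq
      · exact absurd h10 one_ne_zero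
    obtain ⟨L, hL, hsum, hnn⟩ := rtg_to_list B (toF a) (toF b) hcc
    have ea : (fun I => (((toF a) I : ℕ) : ℤ)) = v₁ := by
      funext I; rw [toF_apply]; exact (congrFun hv₁ I).symm
    have eb : (fun I => (((toF b) I : ℕ) : ℤ)) = v₂ := by
      funext I; rw [toF_apply]; exact (congrFun hv₂ I).symm
    rw [ea, eb] at hsum
    rw [ea] at hnn
    exact ⟨L, hL, hsum, hnn⟩

end BinaryGraphModels
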